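/- Let ((S,T),(U,V)) be a twin cotorsion pair on an extriangulated category B, and let B ∈ B. Construct B^+ via a commutative diagram of conflations obtained from conflations V_B ↣ U_B ↠ B (U_B ∈ U, V_B ∈ V) and U_B ↣ T^U ↠ S^U (T^U ∈ T, S^U ∈ S) by axiom (ET4), yielding a conflation B ↣ B^+ ↠ S^U. Then B ↣ B^+ ↠ S^U is a reflection sequence for B. Dually, the conflation V_T ↣ B^- ↠ B constructed from conflations B ↣ T^B ↠ S^B and V_T ↣ U_T ↠ T^B by (ET4)^op is a coreflection sequence for B. -/

import Mathlib

namespace ExtriHearts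

open CategoryTheory CategoryTheory.Limits Opposite

attribute [local instance] CategoryTheory.Limits.hasBinaryBiproducts_of_finite_biproducts

universe v u v₂ u₂

section IdealQuotient

variable {D : Type u₂} [Category.{v₂} D] [Preadditive D]

/-- The subgroup of morphisms `X ⟶ Y` generated by those factoring through an object of `W`. -/
def wIdeal (W : Set D) (X Y : D) : AddSubgroup (X ⟶ Y) :=
  AddSubgroup.closure {f : X ⟶ Y | ∃ Z ∈ W, ∃ p : X ⟶ Z, ∃ q : Z ⟶ Y, f = p ≫ q}

/-- The hom relation on `D` identifying morphisms whose difference lies in the ideal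
generated by morphisms factoring through an object of `W`.  (For an additively closed
subcategory `W` this is the usual relation "`f - g` factors through an object of `W`".) -/
def wRel (W : Set D) : HomRel D := fun {X Y} f g => f - g ∈ wIdeal W X Y

lemma comp_left_mem_wIdeal (W : Set D) {X Y Z : D} (f : X ⟶ Y) {g : Y ⟶ Z}
    (hg : g ∈ wIdeal W Y Z) : f ≫ g ∈ wIdeal W X Z := by
  have hle : wIdeal W Y Z ≤ (wIdeal W X Z).comap (Preadditive.leftComp Z f) := by
    rw [wIdeal, AddSubgroup.closure_le]
    rintro g ⟨Z₀, hZ₀, p, q, rfl⟩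
    exact AddSubgroup.subset_closure ⟨Z₀, hZ₀, f ≫ p, q, by
      simp [Preadditive.leftComp]⟩
  simpa [Preadditive.leftComp] using hle hg

lemma comp_right_mem_wIdeal (W : Set D) {X Y Z : D} {f : X ⟶ Y} (g : Y ⟶ Z)
    (hf : f ∈ wIdeal W X Y) : f ≫ g ∈ wIdeal W X Z := by
  have hle : wIdeal W X Y ≤ (wIdeal W X Z).comap (Preadditive.rightComp X g) := by
    rw [wIdeal, AddSubgroup.closure_le]
    rintro f ⟨Z₀, hZ₀, p, q, rfl⟩
    exact AddSubgroup.subset_closure ⟨Z₀, hZ₀, p, q ≫ g, by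
      simp [Preadditive.rightComp]⟩
  simpa [Preadditive.rightComp] using hle hf

instance wRel_congruence (W : Set D) : Congruence (wRel W) where
  equivalence :=
    { refl := fun f => by
        show f - f ∈ wIdeal W _ _
        simp only [sub_self]
        exact zero_mem _
      symm := fun {f g} h => by
        have h' : f - g ∈ wIdeal W _ _ := h
        show g - f ∈ wIdeal W _ _
        simpa only [neg_sub] using neg_mem h'
      trans := fun {f g h} h₁ h₂ => by
        have h₁' : f - g ∈ wIdeal W _ _ := h₁
        have h₂' : g - h ∈ wIdeal W _ _ := h₂
        show f - h ∈ wIdeal W _ _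
        simpa only [sub_add_sub_cancel] using add_mem h₁' h₂' }
  comp_left := fun {X Y Z} f {g g'} h => by
    have h' : g - g' ∈ wIdeal W _ _ := h
    show f ≫ g - f ≫ g' ∈ wIdeal W _ _
    simpa only [← Preadditive.comp_sub] using comp_left_mem_wIdeal W f h'
  comp_right := fun {X Y Z} {f f'} g h => by
    have h' : f - f' ∈ wIdeal W _ _ := h
    show f ≫ g - f' ≫ g ∈ wIdeal W _ _
    simpa only [← Preadditive.sub_comp] using comp_right_mem_wIdeal W g h'

/-- The quotient of a preadditive category by (the ideal generated by) the morphisms factoring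
through a class of objects `W`. -/
abbrev QuotCat (W : Set D) := CategoryTheory.Quotient (wRel W)

/-- The canonical quotient functor. -/
abbrev toQuot (W : Set D) : D ⥤ QuotCat W := Quotient.functor _

instance quotCatPreadditive (W : Set D) : Preadditive (QuotCat W) :=
  Quotient.preadditive _ (fun X Y f₁ f₂ g₁ g₂ h₁ h₂ => by
    have h₁' : f₁ - f₂ ∈ wIdeal W X Y := h₁
    have h₂' : g₁ - g₂ ∈ wIdeal W X Y := h₂
    show f₁ + g₁ - (f₂ + g₂) ∈ wIdeal W X Y
    have heq : f₁ + g₁ - (f₂ + g₂) = f₁ - f₂ + (g₁ - g₂) := by abel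
    rw [heq]
    exact add_mem h₁' h₂')

end IdealQuotient

section ExtCat

/-- The data of an additive `Ab`-valued bifunctor together with a realization predicate:
`realize δ x y` means that the 3-term sequence `A --x--> X --y--> C` realizes the
`E`-extension `δ ∈ E(C,A)`, i.e. belongs to the equivalence class `s(δ)`. -/
structure PreExtStruct (B : Type u) [Category.{v} B] [Preadditive B] where
  /-- The additive bifunctor `E : Bᵒᵖ × B → Ab`. -/
  E : Bᵒᵖ ⥤ B ⥤ AddCommGrpCat.{v}

namespace PreExtStruct

variable {B : Type u} [Category.{v} B] [Preadditive B]

/-- The abelian group `E(C,A)` of `E`-extensions of `C` by `A`. -/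
abbrev Ext (σ : PreExtStruct B) (C A : B) : AddCommGrpCat.{v} := (σ.E.obj (op C)).obj A

/-- `a_* δ`, the pushforward of an `E`-extension along `a : A ⟶ A'`. -/
def push (σ : PreExtStruct B) {C A A' : B} (a : A ⟶ A') (δ : σ.Ext C A) : σ.Ext C A' :=
  (σ.E.obj (op C)).map a δ

/-- `c^* δ`, the pullback of an `E`-extension along `c : C' ⟶ C`. -/
def pull (σ : PreExtStruct B) {C' C A : B} (c : C' ⟶ C) (δ : σ.Ext C A) : σ.Ext C' A :=
  (σ.E.map c.op).app A δ

/-- The direct sum `δ ⊕ δ'` of two `E`-extensions, i.e. the element of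
`E(C ⊞ C', A ⊞ A')` corresponding to `(δ, 0, 0, δ')`. -/
noncomputable def sumExt (σ : PreExtStruct B) [HasBinaryBiproducts B] {C C' A A' : B}
    (δ : σ.Ext C A) (δ' : σ.Ext C' A') : σ.Ext (C ⊞ C') (A ⊞ A') :=
  σ.push biprod.inl (σ.pull biprod.fst δ) + σ.push biprod.inr (σ.pull biprod.snd δ')

end PreExtStruct

/-- An *extriangulated category* structure `(E, s)` on an additive category `B`, consisting of
an additive bifunctor `E : Bᵒᵖ × B → Ab` and an additive realization `s` of `E` (encoded by the
predicate `realize`), subject to the axioms (ET1), (ET2), (ET3), (ET3)ᵒᵖ, (ET4), (ET4)ᵒᵖ of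
Nakaoka–Palu. -/
structure ExtStruct (B : Type u) [Category.{v} B] [Preadditive B] [HasFiniteBiproducts B]
    extends PreExtStruct B where
  /-- (ET1) `E` is additive in the second variable. -/
  additive_fst : ∀ Cop : Bᵒᵖ, (E.obj Cop).Additive
  /-- (ET1) `E` is additive in the first variable. -/
  additive_snd : ∀ A : B, (E.flip.obj A).Additive
  /-- `realize δ x y` means the sequence `A --x--> X --y--> C` realizes `δ`, i.e. it belongs to
  the equivalence class `s(δ)`. -/
  realize : ∀ ⦃A C : B⦄, toPreExtStruct.Ext C A → ∀ ⦃X : B⦄, (A ⟶ X) → (X ⟶ C) → Prop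
  /-- Every `E`-extension is realized by some sequence. -/
  realize_ex : ∀ ⦃A C : B⦄ (δ : toPreExtStruct.Ext C A),
      ∃ (X : B) (x : A ⟶ X) (y : X ⟶ C), realize δ x y
  /-- `s(δ)` is closed under the equivalence of sequences. -/
  realize_iso : ∀ ⦃A C X X' : B⦄ (δ : toPreExtStruct.Ext C A) (x : A ⟶ X) (y : X ⟶ C)
      (b : X ≅ X'), realize δ x y → realize δ (x ≫ b.hom) (b.inv ≫ y)
  /-- Any two realizations of `δ` are equivalent sequences. -/
  realize_unique : ∀ ⦃A C X X' : B⦄ (δ : toPreExtStruct.Ext C A) (x : A ⟶ X) (y : X ⟶ C)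
      (x' : A ⟶ X') (y' : X' ⟶ C), realize δ x y → realize δ x' y' →
      ∃ b : X ≅ X', x ≫ b.hom = x' ∧ b.hom ≫ y' = y
  /-- (ET2)(∗) Any morphism of `E`-extensions is realized by a morphism of sequences. -/
  realize_map : ∀ ⦃A C A' C' X X' : B⦄ (δ : toPreExtStruct.Ext C A) (δ' : toPreExtStruct.Ext C' A')
      (x : A ⟶ X) (y : X ⟶ C) (x' : A' ⟶ X') (y' : X' ⟶ C') (a : A ⟶ A') (c : C ⟶ C'),
      realize δ x y → realize δ' x' y' →
      toPreExtStruct.push a δ = toPreExtStruct.pull c δ' →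
      ∃ b : X ⟶ X', x ≫ b = a ≫ x' ∧ y ≫ c = b ≫ y'
  /-- (ET2)(i) The split extension is realized by the split sequence. -/
  realize_zero : ∀ A C : B,
      realize (0 : toPreExtStruct.Ext C A) (biprod.inl : A ⟶ A ⊞ C) (biprod.snd : A ⊞ C ⟶ C)
  /-- (ET2)(ii) Realization is additive. -/
  realize_sum : ∀ ⦃A C A' C' X X' : B⦄ (δ : toPreExtStruct.Ext C A)
      (δ' : toPreExtStruct.Ext C' A') (x : A ⟶ X) (y : X ⟶ C) (x' : A' ⟶ X') (y' : X' ⟶ C'),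
      realize δ x y → realize δ' x' y' →
      realize (toPreExtStruct.sumExt δ δ') (biprod.map x x') (biprod.map y y')
  /-- (ET3) -/
  et3 : ∀ ⦃A C A' C' X X' : B⦄ (δ : toPreExtStruct.Ext C A) (δ' : toPreExtStruct.Ext C' A')
      (x : A ⟶ X) (y : X ⟶ C) (x' : A' ⟶ X') (y' : X' ⟶ C'),
      realize δ x y → realize δ' x' y' → ∀ (a : A ⟶ A') (b : X ⟶ X'), x ≫ b = a ≫ x' →
      ∃ c : C ⟶ C', toPreExtStruct.push a δ = toPreExtStruct.pull c δ' ∧ y ≫ c = b ≫ y'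
  /-- (ET3)ᵒᵖ -/
  et3op : ∀ ⦃A C A' C' X X' : B⦄ (δ : toPreExtStruct.Ext C A) (δ' : toPreExtStruct.Ext C' A')
      (x : A ⟶ X) (y : X ⟶ C) (x' : A' ⟶ X') (y' : X' ⟶ C'),
      realize δ x y → realize δ' x' y' → ∀ (b : X ⟶ X') (c : C ⟶ C'), y ≫ c = b ≫ y' →
      ∃ a : A ⟶ A', toPreExtStruct.push a δ = toPreExtStruct.pull c δ' ∧ x ≫ b = a ≫ x'
  /-- (ET4) -/
  et4 : ∀ ⦃A B₀ D C F : B⦄ (δ : toPreExtStruct.Ext D A) (f : A ⟶ B₀) (f' : B₀ ⟶ D)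
      (δ' : toPreExtStruct.Ext F B₀) (g : B₀ ⟶ C) (g' : C ⟶ F),
      realize δ f f' → realize δ' g g' →
      ∃ (E₀ : B) (d : D ⟶ E₀) (e : E₀ ⟶ F) (h' : C ⟶ E₀) (δ'' : toPreExtStruct.Ext E₀ A),
        g ≫ h' = f' ≫ d ∧ h' ≫ e = g' ∧
        realize δ'' (f ≫ g) h' ∧ realize (toPreExtStruct.push f' δ') d e ∧
        toPreExtStruct.pull d δ'' = δ ∧ toPreExtStruct.push f δ'' = toPreExtStruct.pull e δ'
  /-- (ET4)ᵒᵖ -/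
  et4op : ∀ ⦃F C B₀ D A : B⦄ (δ' : toPreExtStruct.Ext B₀ F) (s : F ⟶ C) (t : C ⟶ B₀)
      (δ : toPreExtStruct.Ext A D) (u : D ⟶ B₀) (v : B₀ ⟶ A),
      realize δ' s t → realize δ u v →
      ∃ (E₀ : B) (e : F ⟶ E₀) (d : E₀ ⟶ D) (m : E₀ ⟶ C) (δ'' : toPreExtStruct.Ext A E₀),
        m ≫ t = d ≫ u ∧ e ≫ m = s ∧
        realize δ'' m (t ≫ v) ∧ realize (toPreExtStruct.pull u δ') e d ∧
        toPreExtStruct.push d δ'' = δ ∧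
        toPreExtStruct.pull v δ'' = toPreExtStruct.push e δ'

namespace ExtStruct

variable {B : Type u} [Category.{v} B] [Preadditive B] [HasFiniteBiproducts B] (σ : ExtStruct B)

/-- A sequence `A --x--> X --y--> C` is a conflation if it realizes some `E`-extension. -/
def Conflation {A X C : B} (x : A ⟶ X) (y : X ⟶ C) : Prop :=
  ∃ δ : σ.Ext C A, σ.realize δ x y

/-- `Cone(D₁, D₂)`: objects `X` admitting a conflation `D₁ ↣ D₂ ↠ X`. -/
def Cone (D₁ D₂ : Set B) : Set B :=
  {X | ∃ (A Y : B) (f : A ⟶ Y) (g : Y ⟶ X), A ∈ D₁ ∧ Y ∈ D₂ ∧ σ.Conflation f g}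

/-- `CoCone(D₁, D₂)`: objects `X` admitting a conflation `X ↣ D₁ ↠ D₂`. -/
def CoCone (D₁ D₂ : Set B) : Set B :=
  {X | ∃ (Y C : B) (f : X ⟶ Y) (g : Y ⟶ C), Y ∈ D₁ ∧ C ∈ D₂ ∧ σ.Conflation f g}

/-- `D₁ ∗ D₂`: objects `X` admitting a conflation `D₁ ↣ X ↠ D₂`. -/
def star (D₁ D₂ : Set B) : Set B :=
  {X | ∃ (A C : B) (f : A ⟶ X) (g : X ⟶ C), A ∈ D₁ ∧ C ∈ D₂ ∧ σ.Conflation f g}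

/-- `add(D₁ ∗ D₂)`: direct summands of objects of `D₁ ∗ D₂`. -/
def addStar (D₁ D₂ : Set B) : Set B :=
  {X | ∃ Y ∈ σ.star D₁ D₂, ∃ (s : X ⟶ Y) (r : Y ⟶ X), s ≫ r = 𝟙 X}

/-- An object `P` is projective if `E(P, −) = 0`. -/
def IsProj (P : B) : Prop := ∀ (A : B) (δ : σ.Ext P A), δ = 0

/-- An object `I` is injective if `E(−, I) = 0`. -/
def IsInj (I : B) : Prop := ∀ (C : B) (δ : σ.Ext C I), δ = 0

/-- The class of projective objects. -/
def projs : Set B := {P | σ.IsProj P}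

/-- `B` has enough projectives: every object admits a deflation from a projective. -/
def EnoughProj : Prop :=
  ∀ X : B, ∃ (P K : B) (i : K ⟶ P) (p : P ⟶ X), σ.IsProj P ∧ σ.Conflation i p

/-- `B` has enough injectives: every object admits an inflation into an injective. -/
def EnoughInj : Prop :=
  ∀ X : B, ∃ (I C : B) (i : X ⟶ I) (p : I ⟶ C), σ.IsInj I ∧ σ.Conflation i p

end ExtStruct

/-- A full additive subcategory (given as a class of objects), closed under isomorphisms and
direct summands. -/
structure AddClosed {B : Type u} [Category.{v} B] [Preadditive B] [HasFiniteBiproducts B]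
    (U : Set B) : Prop where
  zero_mem : ∀ Z : B, IsZero Z → Z ∈ U
  biprod_mem : ∀ X Y : B, X ∈ U → Y ∈ U → (X ⊞ Y) ∈ U
  summand_mem : ∀ X Y : B, Y ∈ U → ∀ (s : X ⟶ Y) (r : Y ⟶ X), s ≫ r = 𝟙 X → X ∈ U

namespace ExtStruct

variable {B : Type u} [Category.{v} B] [Preadditive B] [HasFiniteBiproducts B] (σ : ExtStruct B)

/-- A (complete) cotorsion pair `(U, V)` on an extriangulated category. -/
structure IsCotorsionPair (U V : Set B) : Prop where
  addU : AddClosed U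
  addV : AddClosed V
  ext_vanish : ∀ ⦃X : B⦄, X ∈ U → ∀ ⦃Y : B⦄, Y ∈ V → ∀ δ : σ.Ext X Y, δ = 0
  resolve : ∀ X : B, ∃ (V₀ U₀ : B) (f : V₀ ⟶ U₀) (g : U₀ ⟶ X),
      V₀ ∈ V ∧ U₀ ∈ U ∧ σ.Conflation f g
  coresolve : ∀ X : B, ∃ (V₀ U₀ : B) (f : X ⟶ V₀) (g : V₀ ⟶ U₀),
      V₀ ∈ V ∧ U₀ ∈ U ∧ σ.Conflation f g

/-- A twin cotorsion pair `((S,T), (U,V))`. -/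
structure IsTwinCotorsionPair (S T U V : Set B) : Prop where
  fst : σ.IsCotorsionPair S T
  snd : σ.IsCotorsionPair U V
  ext_SV : ∀ ⦃X : B⦄, X ∈ S → ∀ ⦃Y : B⦄, Y ∈ V → ∀ δ : σ.Ext X Y, δ = 0

section Twin

variable (S T U V : Set B)

/-- `B⁺ = Cone(V, W)` for the core `W = T ∩ U` of a twin cotorsion pair. -/
def tPos : Set B := σ.Cone V (T ∩ U)

/-- `B⁻ = CoCone(W, S)` for the core `W = T ∩ U` of a twin cotorsion pair. -/
def tNeg : Set B := σ.CoCone (T ∩ U) S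

/-- The class of objects of the heart `H = B⁺ ∩ B⁻` of a twin cotorsion pair. -/
def tHeartSet : Set B := σ.tPos T U V ∩ σ.tNeg S T U

/-- The heart `H/W` of a twin cotorsion pair, as a full subcategory of the quotient
category `B/W`. -/
abbrev THeart := ObjectProperty.FullSubcategory (fun X : QuotCat (T ∩ U : Set B) => X.as ∈ σ.tHeartSet S T U V)


/-- A *reflection sequence* for `B₀`: a conflation `B₀ ↣ Z ↠ S₀` with `Z ∈ B⁺`, `S₀ ∈ S`,
such that `z^* : E(Z, V₀) → E(B₀, V₀)` is surjective for every `V₀ ∈ V`. -/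
def IsReflectionSeq {B₀ Z S₀ : B} (z : B₀ ⟶ Z) (w : Z ⟶ S₀) : Prop :=
  Z ∈ σ.tPos T U V ∧ S₀ ∈ S ∧ σ.Conflation z w ∧
    ∀ ⦃V₀ : B⦄, V₀ ∈ V → Function.Surjective (fun δ : σ.Ext Z V₀ => σ.pull z δ)

/-- A *coreflection sequence* for `B₀`: a conflation `V₀ ↣ X ↠ B₀` with `X ∈ B⁻`, `V₀ ∈ V`,
such that `x_* : E(S₀, X) → E(S₀, B₀)` is surjective for every `S₀ ∈ S`. -/
def IsCoreflectionSeq {V₀ X B₀ : B} (v : V₀ ⟶ X) (x : X ⟶ B₀) : Prop :=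
  X ∈ σ.tNeg S T U ∧ V₀ ∈ V ∧ σ.Conflation v x ∧
    ∀ ⦃S₀ : B⦄, S₀ ∈ S → Function.Surjective (fun δ : σ.Ext S₀ X => σ.push x δ)

end Twin

section Single

variable (U V : Set B)

/-- `B⁺` for a single cotorsion pair `(U,V)`, with core `W = U ∩ V`. -/
def sPos : Set B := σ.Cone V (U ∩ V)

/-- `B⁻` for a single cotorsion pair `(U,V)`, with core `W = U ∩ V`. -/
def sNeg : Set B := σ.CoCone (U ∩ V) U

/-- The class of objects of the heart of a single cotorsion pair. -/
def sHeartSet : Set B := σ.sPos U V ∩ σ.sNeg U V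

/-- The heart `H/W` of a cotorsion pair `(U,V)`, a full subcategory of `B/W`, `W = U ∩ V`. -/
abbrev SHeart := ObjectProperty.FullSubcategory (fun X : QuotCat (U ∩ V : Set B) => X.as ∈ σ.sHeartSet U V)

/-- The inclusion of the heart into the quotient category `B/W`. -/
abbrev sHeartIncl : σ.SHeart U V ⥤ QuotCat (U ∩ V : Set B) := ObjectProperty.ι _

/-- The kernel `K = add(U ∗ V)` of a cotorsion pair. -/
def kernelSet : Set B := σ.addStar U V

/-- The coheart `C = ⊥₁K` of a cotorsion pair. -/
def coheart : Set B := {X | ∀ ⦃K : B⦄, K ∈ σ.kernelSet U V → ∀ δ : σ.Ext X K, δ = 0}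


/-- An object of the heart determined by an object of `B` lying in `B⁺ ∩ B⁻`. -/
def sHeartObj {X : B} (hX : X ∈ σ.sHeartSet U V) : σ.SHeart U V :=
  ⟨(toQuot (U ∩ V : Set B)).obj X, hX⟩

/-- The image in the heart of a morphism of `B` between objects of `B⁺ ∩ B⁻`. -/
def sHeartHom {X Y : B} (hX : X ∈ σ.sHeartSet U V) (hY : Y ∈ σ.sHeartSet U V) (f : X ⟶ Y) :
    σ.sHeartObj U V hX ⟶ σ.sHeartObj U V hY :=
  ObjectProperty.homMk ((toQuot (U ∩ V : Set B)).map f)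

end Single

end ExtStruct

end ExtCat

section More

variable {B : Type u} [Category.{v} B] [Preadditive B] [HasFiniteBiproducts B]

namespace ExtStruct

variable (σ : ExtStruct B)

/-- `Ω D₀ = CoCone(P, D₀)`, the syzygy class of a class of objects `D₀`. -/
def omegaSet (D₀ : Set B) : Set B := σ.CoCone σ.projs D₀

/-- A choice of iterated syzygies of `X`: `Z 0 = X` and for each `i` there is a conflation
`Z (i+1) ↣ P ↠ Z i` with `P` projective. -/
def SyzygyChain (X : B) (Z : ℕ → B) : Prop :=
  Z 0 = X ∧ ∀ i : ℕ, ∃ (P : B) (f : Z (i + 1) ⟶ P) (g : P ⟶ Z i),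
    σ.IsProj P ∧ σ.Conflation f g

/-- A choice of iterated cosyzygies of `Y`: `Z 0 = Y` and for each `i` there is a conflation
`Z i ↣ I ↠ Z (i+1)` with `I` injective. -/
def CosyzygyChain (Y : B) (Z : ℕ → B) : Prop :=
  Z 0 = Y ∧ ∀ i : ℕ, ∃ (I : B) (f : Z i ⟶ I) (g : I ⟶ Z (i + 1)),
    σ.IsInj I ∧ σ.Conflation f g

/-- Vanishing of the higher extension group `E^{i+1}(X, Y) = E(X, Σ^i Y)`, expressed via
cosyzygy chains.  (`hExtVanish σ X Y 0` is the vanishing of `E(X,Y)` itself.) -/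
def hExtVanish (X Y : B) (i : ℕ) : Prop :=
  ∀ Z : ℕ → B, σ.CosyzygyChain Y Z → ∀ δ : σ.Ext X (Z i), δ = 0

/-- `Σ^j D₀`: the class of `j`-th cosyzygies of objects of `D₀`. -/
def sigmaSet (j : ℕ) (D₀ : Set B) : Set B :=
  {X | ∃ Y ∈ D₀, ∃ Z : ℕ → B, σ.CosyzygyChain Y Z ∧ Z j = X}

/-- An `n`-cluster tilting subcategory of an extriangulated category:
it is functorially finite, and `X ∈ M` iff `E^i(X, M) = 0` for `1 ≤ i ≤ n - 1`,
iff `E^i(M, X) = 0` for `1 ≤ i ≤ n - 1`. -/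
structure IsNClusterTilting (n : ℕ) (M : Set B) : Prop where
  contravariantly_finite : ∀ X : B, ∃ M₀ ∈ M, ∃ f : M₀ ⟶ X,
      ∀ M₁ ∈ M, ∀ g : M₁ ⟶ X, ∃ h : M₁ ⟶ M₀, h ≫ f = g
  covariantly_finite : ∀ X : B, ∃ M₀ ∈ M, ∃ f : X ⟶ M₀,
      ∀ M₁ ∈ M, ∀ g : X ⟶ M₁, ∃ h : M₀ ⟶ M₁, f ≫ h = g
  mem_iff_vanish_left : ∀ X : B,
      X ∈ M ↔ ∀ i : ℕ, i ≤ n - 2 → ∀ Y ∈ M, σ.hExtVanish X Y i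
  mem_iff_vanish_right : ∀ X : B,
      X ∈ M ↔ ∀ i : ℕ, i ≤ n - 2 → ∀ Y ∈ M, σ.hExtVanish Y X i

/-- `mlev σ M k` is the subcategory `M_{k+1}` of the paper: `M_1 = M` and
`M_{ℓ} = Cone(M_{ℓ-1}, M)`. -/
def mlev (M : Set B) : ℕ → Set B
  | 0 => M
  | (k + 1) => σ.Cone (mlev M k) M

end ExtStruct

section Reflectors

variable (W P N : Set B)

/-- The data of a reflection functor `σ⁺` onto the objects of `B⁺` (given by the class `P`),
i.e. a left adjoint of the inclusion of the full subcategory of `B/W` on `P` in the bijection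
formulation: composing with the unit `B → σ⁺B` gives bijections
`(σ⁺X ⟶ Y) ≃ (X ⟶ Y)` for all `Y` lying in `P`. -/
structure ReflectorData where
  σp : QuotCat W ⥤ QuotCat W
  mem : ∀ X : QuotCat W, (σp.obj X).as ∈ P
  unit : 𝟭 (QuotCat W) ⟶ σp
  bij : ∀ (X Y : QuotCat W), Y.as ∈ P →
      Function.Bijective (fun g : (σp.obj X ⟶ Y) => unit.app X ≫ g)

/-- The data of a coreflection functor `σ⁻` onto the objects of `B⁻` (given by the class `N`). -/
structure CoreflectorData where
  σm : QuotCat W ⥤ QuotCat W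
  mem : ∀ X : QuotCat W, (σm.obj X).as ∈ N
  counit : σm ⟶ 𝟭 (QuotCat W)
  bij : ∀ (X Y : QuotCat W), X.as ∈ N →
      Function.Bijective (fun g : (X ⟶ σm.obj Y) => g ≫ counit.app Y)

end Reflectors

namespace ExtStruct

variable (σ : ExtStruct B)

/-- The data of the cohomological functor `H = σ⁻ ∘ σ⁺ ∘ π : B → H` associated to a cotorsion
pair `(U, V)`: reflection and coreflection functors together with a functor `H` to the heart
which is isomorphic to `σ⁻ ∘ σ⁺ ∘ π` after composition with the inclusion of the heart. -/
structure HeartFunctorData (U V : Set B) where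
  refl : ReflectorData (B := B) (U ∩ V) (σ.sPos U V)
  corefl : CoreflectorData (B := B) (U ∩ V) (σ.sNeg U V)
  H : B ⥤ σ.SHeart U V
  iso : (H ⋙ σ.sHeartIncl U V) ≅ (toQuot (U ∩ V : Set B) ⋙ refl.σp ⋙ corefl.σm)

end ExtStruct

section Mod

variable (D : Type u₂) [Category.{v₂} D] [Preadditive D]

/-- A coherent (finitely presented) functor `Dᵒᵖ ⥤ Ab`: one admitting an exact presentation
`Hom(−,X) → Hom(−,Y) → F → 0`. -/
def IsCoherent (F : Dᵒᵖ ⥤ AddCommGrpCat.{v₂}) : Prop :=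
  ∃ (X Y : D) (f : X ⟶ Y) (η : preadditiveYoneda.obj Y ⟶ F),
    (∀ A : D, Function.Surjective (η.app (op A))) ∧
    (∀ (A : D) (g : A ⟶ Y), η.app (op A) g = 0 ↔ ∃ h : A ⟶ X, h ≫ f = g)

/-- `mod D`: the category of coherent functors `Dᵒᵖ ⥤ Ab`. -/
abbrev ModCat := ObjectProperty.FullSubcategory (fun F : Dᵒᵖ ⥤ AddCommGrpCat.{v₂} => IsCoherent D F)

end Mod

/-- The additive quotient `C/P` of the full subcategory of `B` on a class `C₀` of objects by
(the ideal of) morphisms factoring through objects satisfying `P₀`. -/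
abbrev StableCat (C₀ P₀ : Set B) :=
  QuotCat (D := ObjectProperty.FullSubcategory (fun X : B => X ∈ C₀)) {Z | Z.obj ∈ P₀}

end More


/- ## Auxiliary lemmas towards Statement 3 -/

section AuxStatementThree

open PreExtStruct

variable {B : Type u} [Category.{v} B] [Preadditive B]

namespace PreExtStruct

variable (σ : PreExtStruct B)

@[simp] lemma push_id_ext {C A : B} (δ : σ.Ext C A) : σ.push (𝟙 A) δ = δ := by
  simp [push]

@[simp] lemma pull_id_ext {C A : B} (δ : σ.Ext C A) : σ.pull (𝟙 C) δ = δ := by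
  simp [pull]

lemma push_comp_ext {C A A' A'' : B} (a : A ⟶ A') (a' : A' ⟶ A'') (δ : σ.Ext C A) :
    σ.push (a ≫ a') δ = σ.push a' (σ.push a δ) := by
  simp [push]

lemma pull_comp_ext {C'' C' C A : B} (c' : C'' ⟶ C') (c : C' ⟶ C) (δ : σ.Ext C A) :
    σ.pull (c' ≫ c) δ = σ.pull c' (σ.pull c δ) := by
  simp [pull]

lemma pull_push_ext {C' C A A' : B} (c : C' ⟶ C) (a : A ⟶ A') (δ : σ.Ext C A) :
    σ.pull c (σ.push a δ) = σ.push a (σ.pull c δ) := by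
  have h := congrArg (fun (f : (σ.E.obj (op C)).obj A ⟶ (σ.E.obj (op C')).obj A')
      => f δ) ((σ.E.map c.op).naturality a)
  simp only [CategoryTheory.comp_apply] at h
  exact h

@[simp] lemma push_zero_ext {C A A' : B} (a : A ⟶ A') : σ.push a (0 : σ.Ext C A) = 0 :=
  map_zero _

@[simp] lemma pull_zero_ext {C' C A : B} (c : C' ⟶ C) : σ.pull c (0 : σ.Ext C A) = 0 :=
  map_zero _

end PreExtStruct

namespace ExtStruct

variable [HasFiniteBiproducts B] (σ : ExtStruct B)

lemma push_sub_ext {C A A' : B} (a a' : A ⟶ A') (δ : σ.Ext C A) :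
    σ.push (a - a') δ = σ.push a δ - σ.push a' δ := by
  haveI := σ.additive_fst (op C)
  show ((σ.E.obj (op C)).map (a - a')) δ = _
  rw [Functor.map_sub]
  rfl

lemma pull_sub_ext {C' C A : B} (c c' : C' ⟶ C) (δ : σ.Ext C A) :
    σ.pull (c - c') δ = σ.pull c δ - σ.pull c' δ := by
  haveI := σ.additive_snd A
  show ((σ.E.flip.obj A).map (c - c').op) δ = _
  have hop : (c - c').op = c.op - c'.op := by
    simpa using map_sub (opHom C' C) c c'
  rw [hop, Functor.map_sub]
  rfl

section RealLemmas

open ZeroObject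

variable {σ}

lemma zero_realize_splits {A X C : B} {f : A ⟶ X} {g : X ⟶ C}
    (h : σ.realize (0 : σ.Ext C A) f g) :
    (∃ r : X ⟶ A, f ≫ r = 𝟙 A) ∧ (∃ s : C ⟶ X, s ≫ g = 𝟙 C) := by
  obtain ⟨b, hb1, hb2⟩ := σ.realize_unique (0 : σ.Ext C A) biprod.inl biprod.snd f g
    (σ.realize_zero A C) h
  constructor
  · refine ⟨b.inv ≫ biprod.fst, ?_⟩
    have hfb : f ≫ b.inv = biprod.inl := by
      rw [← hb1, Category.assoc, b.hom_inv_id, Category.comp_id]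
    rw [← Category.assoc, hfb, biprod.inl_fst]
  · refine ⟨biprod.inr ≫ b.hom, ?_⟩
    rw [Category.assoc, hb2, biprod.inr_snd]

lemma realize_comp_zero {A X C : B} {δ : σ.Ext C A} {f : A ⟶ X} {g : X ⟶ C}
    (h : σ.realize δ f g) : f ≫ g = 0 ∧ σ.pull g δ = 0 := by
  obtain ⟨c, hc1, hc2⟩ := σ.et3 (0 : σ.Ext X A) δ biprod.inl biprod.snd f g
    (σ.realize_zero A X) h (𝟙 A) (biprod.desc f (𝟙 X)) (by simp)
  have hfg : f ≫ g = 0 := by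
    have h' := congrArg (fun t => biprod.inl ≫ t) hc2
    simp only [biprod.inl_snd_assoc, zero_comp, biprod.inl_desc_assoc] at h'
    exact h'.symm
  have hcg : c = g := by
    have h' := congrArg (fun t => biprod.inr ≫ t) hc2
    simp only [biprod.inr_snd_assoc, Category.id_comp, biprod.inr_desc_assoc] at h'
    exact h'
  refine ⟨hfg, ?_⟩
  rw [← hcg, ← hc1]
  simp

lemma realize_push_self {A X C : B} {δ : σ.Ext C A} {f : A ⟶ X} {g : X ⟶ C}
    (h : σ.realize δ f g) : σ.push f δ = 0 := by
  obtain ⟨a, ha1, ha2⟩ := σ.et3op δ (0 : σ.Ext C X) f g biprod.inl biprod.snd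
    h (σ.realize_zero X C) (biprod.lift (𝟙 X) g) (𝟙 C) (by simp)
  have haf : a = f := by
    have h' := congrArg (fun t => t ≫ biprod.fst) ha2
    simp only [Category.assoc, biprod.lift_fst, biprod.inl_fst,
      Category.comp_id] at h'
    exact h'.symm
  rw [← haf, ha1]
  simp

lemma lift_of_pull_zero {A X C Z : B} {δ : σ.Ext C A} {f : A ⟶ X} {g : X ⟶ C}
    (h : σ.realize δ f g) {w : Z ⟶ C} (hw : σ.pull w δ = 0) :
    ∃ l : Z ⟶ X, l ≫ g = w := by
  obtain ⟨b, hb1, hb2⟩ := σ.realize_map (0 : σ.Ext Z A) δ biprod.inl biprod.snd f g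
    (𝟙 A) w (σ.realize_zero A Z) h (by simp [hw])
  refine ⟨biprod.inr ≫ b, ?_⟩
  rw [Category.assoc, ← hb2, ← Category.assoc, biprod.inr_snd, Category.id_comp]

lemma extend_of_push_zero {A X C T : B} {δ : σ.Ext C A} {f : A ⟶ X} {g : X ⟶ C}
    (h : σ.realize δ f g) {t : A ⟶ T} (ht : σ.push t δ = 0) :
    ∃ e : X ⟶ T, f ≫ e = t := by
  obtain ⟨b, hb1, hb2⟩ := σ.realize_map δ (0 : σ.Ext C T) f g biprod.inl biprod.snd
    t (𝟙 C) h (σ.realize_zero T C) (by simp [ht])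
  refine ⟨b ≫ biprod.fst, ?_⟩
  rw [← Category.assoc, hb1, Category.assoc, biprod.inl_fst, Category.comp_id]

lemma realize_zero_cone (T : B) : σ.realize (0 : σ.Ext T (0 : B)) 0 (𝟙 T) := by
  have h0 := σ.realize_zero (0 : B) T
  let φiso : ((0 : B) ⊞ T) ≅ T :=
    { hom := biprod.snd
      inv := biprod.inr
      hom_inv_id := by
        apply biprod.hom_ext
        · apply (isZero_zero B).eq_of_tgt
        · simp
      inv_hom_id := by simp }
  have h := σ.realize_iso _ _ _ φiso h0
  rw [show biprod.inl ≫ φiso.hom = (0 : (0 : B) ⟶ T) from biprod.inl_snd,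
      show φiso.inv ≫ biprod.snd = 𝟙 T from biprod.inr_snd] at h
  exact h

lemma realize_zero_cocone (Z : B) : σ.realize (0 : σ.Ext (0 : B) Z) (𝟙 Z) 0 := by
  have h0 := σ.realize_zero Z (0 : B)
  let φiso : (Z ⊞ (0 : B)) ≅ Z :=
    { hom := biprod.fst
      inv := biprod.inl
      hom_inv_id := by
        apply biprod.hom_ext
        · simp
        · apply (isZero_zero B).eq_of_tgt
      inv_hom_id := by simp }
  have h := σ.realize_iso _ _ _ φiso h0
  rw [show biprod.inl ≫ φiso.hom = 𝟙 Z from biprod.inl_fst,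
      show φiso.inv ≫ biprod.snd = (0 : Z ⟶ (0 : B)) from biprod.inl_snd] at h
  exact h

lemma weak_cokernel {A X C T : B} {δ : σ.Ext C A} {f : A ⟶ X} {g : X ⟶ C}
    (h : σ.realize δ f g) {w : X ⟶ T} (hw : f ≫ w = 0) :
    ∃ w' : C ⟶ T, g ≫ w' = w := by
  obtain ⟨c, -, hc2⟩ := σ.et3 δ (0 : σ.Ext T (0 : B)) f g 0 (𝟙 T) h
    (σ.realize_zero_cone T) 0 w (by rw [hw]; simp)
  exact ⟨c, by simpa using hc2⟩

lemma weak_kernel {A X C Z : B} {δ : σ.Ext C A} {f : A ⟶ X} {g : X ⟶ C}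
    (h : σ.realize δ f g) {n : Z ⟶ X} (hn : n ≫ g = 0) :
    ∃ m : Z ⟶ A, m ≫ f = n := by
  obtain ⟨a, -, ha2⟩ := σ.et3op (0 : σ.Ext (0 : B) Z) δ (𝟙 Z) 0 f g
    (σ.realize_zero_cocone Z) h n 0 (by rw [hn]; simp)
  refine ⟨a, ?_⟩
  rw [← ha2, Category.id_comp]

lemma exists_push_of_pull_deflation_zero {A X C T : B} {δ : σ.Ext C A}
    {f : A ⟶ X} {g : X ⟶ C} (h : σ.realize δ f g) (ξ : σ.Ext C T)
    (hξ : σ.pull g ξ = 0) : ∃ e : A ⟶ T, σ.push e δ = ξ := by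
  obtain ⟨M, x, y, hr⟩ := σ.realize_ex ξ
  obtain ⟨b, hb1, hb2⟩ := σ.realize_map (0 : σ.Ext X T) ξ biprod.inl biprod.snd x y
    (𝟙 T) g (σ.realize_zero T X) hr (by simp [hξ])
  obtain ⟨a, ha1, -⟩ := σ.et3op δ ξ f g x y h hr (biprod.inr ≫ b) (𝟙 C)
    (by rw [Category.comp_id, Category.assoc, ← hb2, ← Category.assoc,
          biprod.inr_snd, Category.id_comp])
  exact ⟨a, by simpa using ha1⟩

lemma exists_pull_of_push_inflation_zero {A X C Z : B} {δ : σ.Ext C A}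
    {f : A ⟶ X} {g : X ⟶ C} (h : σ.realize δ f g) (ξ : σ.Ext Z A)
    (hξ : σ.push f ξ = 0) : ∃ s : Z ⟶ C, σ.pull s δ = ξ := by
  obtain ⟨N, x₁, y₁, hr⟩ := σ.realize_ex ξ
  obtain ⟨b, hb1, hb2⟩ := σ.realize_map ξ (0 : σ.Ext Z X) x₁ y₁ biprod.inl biprod.snd
    f (𝟙 Z) hr (σ.realize_zero X Z) (by simp [hξ])
  obtain ⟨s, hs1, -⟩ := σ.et3 ξ δ x₁ y₁ f g hr h (𝟙 A) (b ≫ biprod.fst)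
    (by rw [← Category.assoc, hb1, Category.assoc, biprod.inl_fst,
          Category.comp_id, Category.id_comp])
  refine ⟨s, ?_⟩
  rw [← hs1]
  simp

lemma exists_pull_of_pull_inflation_zero {A X C T : B} {δ : σ.Ext C A}
    {f : A ⟶ X} {g : X ⟶ C} (h : σ.realize δ f g) (ξ : σ.Ext X T)
    (hξ : σ.pull f ξ = 0) : ∃ η : σ.Ext C T, σ.pull g η = ξ := by
  obtain ⟨M, x, y, hr⟩ := σ.realize_ex ξ
  obtain ⟨E₀, e, d, m, δ'', h1, h2, h3, h4, h5, h6⟩ := σ.et4op ξ x y δ f g hr h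
  rw [hξ] at h4
  obtain ⟨⟨r, hrr⟩, -⟩ := zero_realize_splits h4
  refine ⟨σ.push r δ'', ?_⟩
  rw [pull_push_ext, h6, ← push_comp_ext, hrr, push_id_ext]

lemma exists_push_of_push_deflation_zero {A X C Z : B} {δ : σ.Ext C A}
    {f : A ⟶ X} {g : X ⟶ C} (h : σ.realize δ f g) (ξ : σ.Ext Z X)
    (hξ : σ.push g ξ = 0) : ∃ ζ : σ.Ext Z A, σ.push f ζ = ξ := by
  obtain ⟨M, x, y, hr⟩ := σ.realize_ex ξ
  obtain ⟨E₀, d, e, h', δ'', h1, h2, h3, h4, h5, h6⟩ := σ.et4 δ f g ξ x y h hr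
  rw [hξ] at h4
  obtain ⟨-, ⟨s, hs⟩⟩ := zero_realize_splits h4
  refine ⟨σ.pull s δ'', ?_⟩
  rw [← pull_push_ext, h6, ← pull_comp_ext, hs, pull_id_ext]

lemma mem_of_ext_vanish_left {U V : Set B} (hp : σ.IsCotorsionPair U V) {X : B}
    (hX : ∀ Y ∈ V, ∀ δ : σ.Ext X Y, δ = 0) : X ∈ U := by
  obtain ⟨V₀, U₀, f, g, hV₀, hU₀, hconf⟩ := hp.resolve X
  obtain ⟨δ, hr⟩ : ∃ δ : σ.Ext X V₀, σ.realize δ f g := hconf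
  rw [hX V₀ hV₀ δ] at hr
  obtain ⟨-, ⟨s, hs⟩⟩ := zero_realize_splits hr
  exact hp.addU.summand_mem X U₀ hU₀ s g hs

lemma mem_of_ext_vanish_right {U V : Set B} (hp : σ.IsCotorsionPair U V) {Y : B}
    (hY : ∀ X ∈ U, ∀ δ : σ.Ext X Y, δ = 0) : Y ∈ V := by
  obtain ⟨V₀, U₀, f, g, hV₀, hU₀, hconf⟩ := hp.coresolve Y
  obtain ⟨δ, hr⟩ : ∃ δ : σ.Ext U₀ Y, σ.realize δ f g := hconf
  rw [hY U₀ hU₀ δ] at hr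
  obtain ⟨⟨r, hrr⟩, -⟩ := zero_realize_splits hr
  exact hp.addV.summand_mem Y V₀ hV₀ f r hrr

end RealLemmas

end ExtStruct

end AuxStatementThree

/-- Definition 2.15 and Proposition 2.16 / `Prop+isRef`.
(a) Given conflations `V_B ↣ U_B ↠ B₀` (`V_B ∈ V`, `U_B ∈ U`) and `U_B ↣ T^U ↠ S^U`
(`T^U ∈ T`, `S^U ∈ S`), the commutative (ET4)-diagram, consisting moreover of the
conflations `V_B ↣ T^U ↠ B⁺` and `B₀ --p_B--> B⁺ ↠ S^U`, exhibits
`B₀ ↣ B⁺ ↠ S^U` as a reflection sequence for `B₀`.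
(b) Dually, the conflation `V_T ↣ B⁻ ↠ B₀` produced by (ET4)ᵒᵖ from conflations
`B₀ ↣ T^B ↠ S^B` and `V_T ↣ U_T ↠ T^B` is a coreflection sequence for `B₀`. -/
theorem statement_3 {B : Type u} [Category.{v} B] [Preadditive B] [HasFiniteBiproducts B]
    (σ : ExtStruct B) {S T U V : Set B} (twin : σ.IsTwinCotorsionPair S T U V) :
    (∀ ⦃VB UB B₀ TU SU Bp : B⦄
      (v : VB ⟶ UB) (uB : UB ⟶ B₀) (u : UB ⟶ TU) (t'' : TU ⟶ SU)
      (t : TU ⟶ Bp) (pB : B₀ ⟶ Bp) (q : Bp ⟶ SU),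
      VB ∈ V → UB ∈ U → TU ∈ T → SU ∈ S →
      σ.Conflation v uB → σ.Conflation u t'' → σ.Conflation (v ≫ u) t →
      σ.Conflation pB q →
      uB ≫ pB = u ≫ t → t ≫ q = t'' →
      σ.IsReflectionSeq S T U V pB q) ∧
    (∀ ⦃VT UT B₀ TB SB Bm : B⦄
      (tB : B₀ ⟶ TB) (sB : TB ⟶ SB) (vt : VT ⟶ UT) (wt : UT ⟶ TB)
      (vm : VT ⟶ Bm) (mB : Bm ⟶ B₀) (nt : Bm ⟶ UT),
      VT ∈ V → UT ∈ U → TB ∈ T → SB ∈ S →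
      σ.Conflation tB sB → σ.Conflation vt wt → σ.Conflation nt (wt ≫ sB) →
      σ.Conflation vm mB →
      nt ≫ wt = mB ≫ tB → vm ≫ nt = vt →
      σ.IsCoreflectionSeq S T U V vm mB) := by
  open PreExtStruct in
  constructor
  · -- part (a): reflection sequences
    intro VB UB B₀ TU SU Bp v uB u t'' t pB q hVB hUB hTU hSU hc1 hc2 hc3 hc4 hsq1 hsq2
    obtain ⟨φ, hφ⟩ : ∃ φ : σ.Ext SU UB, σ.realize φ u t'' := hc2
    obtain ⟨ρ, hρ⟩ : ∃ ρ : σ.Ext Bp VB, σ.realize ρ (v ≫ u) t := hc3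
    obtain ⟨π, hπ⟩ : ∃ π : σ.Ext SU B₀, σ.realize π pB q := hc4
    -- `TU ∈ U`
    have hTU_U : TU ∈ U := by
      refine ExtStruct.mem_of_ext_vanish_left twin.snd (fun Y hY ξ => ?_)
      have hz1 : σ.pull u ξ = 0 := twin.snd.ext_vanish hUB hY (σ.pull u ξ)
      obtain ⟨η, hη⟩ := ExtStruct.exists_pull_of_pull_inflation_zero hφ ξ hz1
      rw [twin.ext_SV hSU hY η] at hη
      rw [← hη, pull_zero_ext]
    -- (ET4)ᵒᵖ applied to the conflations `VB ↣ TU ↠ Bp` and `B₀ ↣ Bp ↠ SU`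
    obtain ⟨E₀, e₁, d₁, m₁, δ₁, h1, h2, h3, h4, h5, h6⟩ :=
      σ.et4op ρ (v ≫ u) t π pB q hρ hπ
    rw [hsq2] at h3
    -- compare the two conflations with deflation `t''`
    obtain ⟨a₄, ha41, ha42⟩ := σ.et3op δ₁ φ m₁ t'' u t'' h3 hφ (𝟙 TU) (𝟙 SU) (by simp)
    obtain ⟨a₂, ha21, ha22⟩ := σ.et3op φ δ₁ u t'' m₁ t'' hφ h3 (𝟙 TU) (𝟙 SU) (by simp)
    rw [pull_id_ext] at ha41 ha21
    rw [Category.comp_id] at ha42 ha22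
    -- `E₀` is a direct summand of `UB`
    have hpj : σ.push (𝟙 E₀ - a₄ ≫ a₂) δ₁ = 0 := by
      rw [ExtStruct.push_sub_ext, push_id_ext, push_comp_ext, ha41, ha21, sub_self]
    obtain ⟨e₇, he₇⟩ := ExtStruct.extend_of_push_zero h3 hpj
    have hm₁t : m₁ ≫ t'' = 0 := (ExtStruct.realize_comp_zero h3).1
    have hjm : (a₄ ≫ a₂) ≫ m₁ = m₁ := by
      rw [Category.assoc, ← ha22, ← ha42]
    have hwm : m₁ ≫ (e₇ ≫ m₁) = 0 := by
      rw [← Category.assoc, he₇, Preadditive.sub_comp, Category.id_comp, hjm, sub_self]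
    obtain ⟨w₇, hw₇⟩ := ExtStruct.weak_cokernel h3 hwm
    have hinner : e₇ ≫ (m₁ ≫ e₇) = (t'' ≫ w₇) ≫ e₇ := by
      rw [hw₇, Category.assoc]
    have hnsq : (m₁ ≫ e₇) ≫ (m₁ ≫ e₇) = 0 := by
      rw [Category.assoc, hinner, ← Category.assoc, ← Category.assoc, hm₁t,
        zero_comp, zero_comp]
    have hj : a₄ ≫ a₂ = 𝟙 E₀ - m₁ ≫ e₇ := by rw [he₇, sub_sub_cancel]
    have key : (𝟙 E₀ - m₁ ≫ e₇) ≫ (𝟙 E₀ + m₁ ≫ e₇) = 𝟙 E₀ := by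
      simp only [Preadditive.sub_comp, Preadditive.comp_add, Category.id_comp,
        Category.comp_id, hnsq]
      abel
    have hretr : a₄ ≫ (a₂ ≫ (𝟙 E₀ + m₁ ≫ e₇)) = 𝟙 E₀ := by
      rw [← Category.assoc, hj, key]
    have hE₀U : E₀ ∈ U :=
      twin.snd.addU.summand_mem E₀ UB hUB a₄ (a₂ ≫ (𝟙 E₀ + m₁ ≫ e₇)) hretr
    refine ⟨?_, hSU, ⟨π, hπ⟩, ?_⟩
    · exact ⟨VB, TU, v ≫ u, t, hVB, ⟨hTU, hTU_U⟩, ⟨ρ, hρ⟩⟩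
    · intro V₀ hV₀ δ
      have hz : σ.pull d₁ δ = 0 := twin.snd.ext_vanish hE₀U hV₀ (σ.pull d₁ δ)
      obtain ⟨hh, hhh⟩ := ExtStruct.exists_push_of_pull_deflation_zero h4 δ hz
      exact ⟨σ.push hh ρ, by dsimp only; rw [pull_push_ext, hhh]⟩
  · -- part (b): coreflection sequences
    intro VT UT B₀ TB SB Bm tB sB vt wt vm mB nt hVT hUT hTB hSB hc1 hc2 hc3 hc4 hsq1 hsq2
    obtain ⟨ω₁, hω⟩ : ∃ ω : σ.Ext TB VT, σ.realize ω vt wt := hc2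
    obtain ⟨ρ', hρ'⟩ : ∃ ρ' : σ.Ext SB Bm, σ.realize ρ' nt (wt ≫ sB) := hc3
    obtain ⟨π', hπ'⟩ : ∃ π' : σ.Ext B₀ VT, σ.realize π' vm mB := hc4
    -- `UT ∈ T`
    have hUT_T : UT ∈ T := by
      refine ExtStruct.mem_of_ext_vanish_right twin.fst (fun X hX ξ => ?_)
      have hz1 : σ.push wt ξ = 0 := twin.fst.ext_vanish hX hTB (σ.push wt ξ)
      obtain ⟨ζ, hζ⟩ := ExtStruct.exists_push_of_push_deflation_zero hω ξ hz1
      rw [twin.ext_SV hX hVT ζ] at hζ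
      rw [← hζ, push_zero_ext]
    -- (ET4) applied to the conflations `VT ↣ Bm ↠ B₀` and `Bm ↣ UT ↠ SB`
    obtain ⟨E₂, d', e', h', δ₂, g1, g2, g3, g4, g5, g6⟩ :=
      σ.et4 π' vm mB ρ' nt (wt ≫ sB) hπ' hρ'
    rw [hsq2] at g3
    -- compare the two conflations with inflation `vt`
    obtain ⟨c₄, hc41, hc42⟩ := σ.et3 δ₂ ω₁ vt h' vt wt g3 hω (𝟙 VT) (𝟙 UT) (by simp)
    obtain ⟨c₂, hc21, hc22⟩ := σ.et3 ω₁ δ₂ vt wt vt h' hω g3 (𝟙 VT) (𝟙 UT) (by simp)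
    rw [push_id_ext] at hc41 hc21
    rw [Category.id_comp] at hc42 hc22
    -- `E₂` is a direct summand of `TB`
    have hpj : σ.pull (𝟙 E₂ - c₄ ≫ c₂) δ₂ = 0 := by
      rw [ExtStruct.pull_sub_ext, pull_id_ext, pull_comp_ext, ← hc21, ← hc41, sub_self]
    obtain ⟨l, hl⟩ := ExtStruct.lift_of_pull_zero g3 hpj
    have hvh : vt ≫ h' = 0 := (ExtStruct.realize_comp_zero g3).1
    have hjh : h' ≫ (c₄ ≫ c₂) = h' := by rw [← Category.assoc, hc42, hc22]
    have hhl : (h' ≫ l) ≫ h' = 0 := by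
      rw [Category.assoc, hl, Preadditive.comp_sub, Category.comp_id, hjh, sub_self]
    obtain ⟨m', hm'⟩ := ExtStruct.weak_kernel g3 hhl
    have hinner : h' ≫ (l ≫ h') = 0 := by
      rw [← Category.assoc, ← hm', Category.assoc, hvh, comp_zero]
    have hnsq : (l ≫ h') ≫ (l ≫ h') = 0 := by
      rw [Category.assoc, hinner, comp_zero]
    have hj : c₄ ≫ c₂ = 𝟙 E₂ - l ≫ h' := by rw [hl, sub_sub_cancel]
    have key : (𝟙 E₂ - l ≫ h') ≫ (𝟙 E₂ + l ≫ h') = 𝟙 E₂ := by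
      simp only [Preadditive.sub_comp, Preadditive.comp_add, Category.id_comp,
        Category.comp_id, hnsq]
      abel
    have hretr : c₄ ≫ (c₂ ≫ (𝟙 E₂ + l ≫ h')) = 𝟙 E₂ := by
      rw [← Category.assoc, hj, key]
    have hE₂T : E₂ ∈ T :=
      twin.fst.addV.summand_mem E₂ TB hTB c₄ (c₂ ≫ (𝟙 E₂ + l ≫ h')) hretr
    refine ⟨?_, hVT, ⟨π', hπ'⟩, ?_⟩
    · exact ⟨UT, SB, nt, wt ≫ sB, ⟨hUT_T, hUT⟩, hSB, ⟨ρ', hρ'⟩⟩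
    · intro S₀ hS₀ δ
      have hz : σ.push d' δ = 0 := twin.fst.ext_vanish hS₀ hE₂T (σ.push d' δ)
      obtain ⟨s, hs⟩ := ExtStruct.exists_pull_of_push_inflation_zero g4 δ hz
      exact ⟨σ.pull s ρ', by dsimp only; rw [← pull_push_ext, hs]⟩

end ExtriHearts
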